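/- Let flop₁(k₁,...,k_n) = Σ_{j=1}^n k_j³ Π_{l<j} k_l. Among all orderings (permutations) of fixed positive integers k₁,...,k_n ≥ 2, flop₁ is minimized when the sequence is arranged in decreasing order, i.e., k₁ ≥ k₂ ≥ ... ≥ k_n. -/

import Mathlib

/-- The recursive 1-D Loewner null space cost functional. -/
def flop1 (n : ℕ) (k : Fin n → ℕ) : ℕ :=
  ∑ j : Fin n, k j ^ 3 * ∏ l ∈ Finset.univ.filter (fun l => l < j), k l

-- swap of an adjacent strict inversion strictly decreases flop1
lemma swap_lt (n : ℕ) (a : Fin n → ℕ) (ha : ∀ l, 2 ≤ a l) (i i' : Fin n)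
    (hii : (i' : ℕ) = (i : ℕ) + 1) (hlt : a i < a i') :
    flop1 n (a ∘ Equiv.swap i i') < flop1 n a := by
  have hi_lt : i < i' := by omega
  have hne : i ≠ i' := ne_of_lt hi_lt
  -- prefix products
  set S : Fin n → Finset (Fin n) := fun j => Finset.univ.filter (fun l => l < j) with hS
  have hfix : ∀ j : Fin n, j ≤ i → ∀ l ∈ S j, (a ∘ Equiv.swap i i') l = a l := by
    intro j hj l hl
    simp only [hS, Finset.mem_filter] at hl
    have h1 : l ≠ i := by have := hl.2; intro h; subst h; exact absurd (lt_of_lt_of_le this hj) (lt_irrefl _)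
    have h2 : l ≠ i' := by have := hl.2; intro h; subst h; omega
    simp [Equiv.swap_apply_of_ne_of_ne h1 h2]
  have hprod_fix : ∀ j : Fin n, j ≤ i →
      (∏ l ∈ S j, (a ∘ Equiv.swap i i') l) = ∏ l ∈ S j, a l :=
    fun j hj => Finset.prod_congr rfl (hfix j hj)
  have hprod_gt : ∀ j : Fin n, i' < j →
      (∏ l ∈ S j, (a ∘ Equiv.swap i i') l) = ∏ l ∈ S j, a l := by
    intro j hj
    refine Finset.prod_equiv (Equiv.swap i i') ?_ ?_
    · intro l
      simp only [hS, Finset.mem_filter, Finset.mem_univ, true_and]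
      rcases eq_or_ne l i with rfl | h1
      · simp [Equiv.swap_apply_left]; omega
      rcases eq_or_ne l i' with rfl | h2
      · simp [Equiv.swap_apply_right]; omega
      · rw [Equiv.swap_apply_of_ne_of_ne h1 h2]
    · intro l _; rfl
  -- decompose sums
  have hmemi : i ∈ (Finset.univ : Finset (Fin n)) := Finset.mem_univ _
  have hmemi' : i' ∈ (Finset.univ.erase i) := Finset.mem_erase.2 ⟨(Ne.symm hne), Finset.mem_univ _⟩
  have split : ∀ b : Fin n → ℕ,
      (∑ j : Fin n, b j) = b i + (b i' + ∑ j ∈ (Finset.univ.erase i).erase i', b j) := by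
    intro b
    rw [← Finset.add_sum_erase _ b hmemi, ← Finset.add_sum_erase _ b hmemi']
  have key : ∀ j ∈ (Finset.univ.erase i).erase i', j ≤ i ∨ i' < j := by
    intro j hj
    simp only [Finset.mem_erase] at hj
    have h1 := hj.1; have h2 := hj.2.1
    rcases lt_or_ge i' j with h | h
    · exact Or.inr h
    · left
      have : (j : ℕ) ≠ (i' : ℕ) := fun h => h1 (Fin.ext h)
      have : (j : ℕ) ≤ (i : ℕ) := by omega
      exact this
  have hrest : ∀ j ∈ (Finset.univ.erase i).erase i',
      (a ∘ Equiv.swap i i') j ^ 3 * ∏ l ∈ S j, (a ∘ Equiv.swap i i') l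
        = a j ^ 3 * ∏ l ∈ S j, a l := by
    intro j hj
    have hjne : j ≠ i' ∧ j ≠ i := by
      simp only [Finset.mem_erase] at hj; exact ⟨hj.1, hj.2.1⟩
    rw [show (a ∘ Equiv.swap i i') j = a j by
      simp [Equiv.swap_apply_of_ne_of_ne hjne.2 hjne.1]]
    rcases key j hj with h | h
    · rw [hprod_fix j h]
    · rw [hprod_gt j h]
  -- the S i' set
  have hSi' : S i' = insert i (S i) := by
    ext l
    simp only [hS, Finset.mem_filter, Finset.mem_univ, true_and, Finset.mem_insert]
    constructor
    · intro h
      rcases eq_or_ne l i with rfl | hne'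
      · exact Or.inl rfl
      · right; have : (l : ℕ) < (i' : ℕ) := h
        have : (l : ℕ) ≠ (i : ℕ) := fun h => hne' (Fin.ext h)
        omega
    · rintro (rfl | h)
      · omega
      · have : (l : ℕ) < (i : ℕ) := h; omega
  have hinotmem : i ∉ S i := by simp [hS]
  set P := ∏ l ∈ S i, a l with hP
  have hP1 : 1 ≤ P := Finset.one_le_prod' (fun l _ => le_trans (by norm_num) (ha l))
  -- compute the four relevant terms
  have ti : a i ^ 3 * ∏ l ∈ S i, a l = a i ^ 3 * P := rfl
  have ti' : a i' ^ 3 * ∏ l ∈ S i', a l = a i' ^ 3 * (a i * P) := by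
    rw [hSi', Finset.prod_insert hinotmem]
  have gi : (a ∘ Equiv.swap i i') i ^ 3 * ∏ l ∈ S i, (a ∘ Equiv.swap i i') l
      = a i' ^ 3 * P := by
    rw [hprod_fix i le_rfl]
    simp [Equiv.swap_apply_left, hP]
  have gi' : (a ∘ Equiv.swap i i') i' ^ 3 * ∏ l ∈ S i', (a ∘ Equiv.swap i i') l
      = a i ^ 3 * (a i' * P) := by
    rw [hSi', Finset.prod_insert hinotmem]
    have h1 : (a ∘ Equiv.swap i i') i' = a i := by simp [Equiv.swap_apply_right]
    have h2 : (a ∘ Equiv.swap i i') i = a i' := by simp [Equiv.swap_apply_left]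
    rw [h1, h2, hprod_fix i le_rfl]
  unfold flop1
  rw [split (fun j => (a ∘ Equiv.swap i i') j ^ 3 * ∏ l ∈ S j, (a ∘ Equiv.swap i i') l),
      split (fun j => a j ^ 3 * ∏ l ∈ S j, a l)]

  rw [Finset.sum_congr rfl hrest, gi, gi', ti']
  have hx := ha i
  set x := a i; set y := a i'
  have hcore : y ^ 3 * P + x ^ 3 * (y * P) < x ^ 3 * P + y ^ 3 * (x * P) := by
    have h1 : y ^ 3 + x ^ 3 * y < x ^ 3 + y ^ 3 * x := by
      have hxz : (2 : ℤ) ≤ (x : ℤ) := by exact_mod_cast hx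
      have hyz : (x : ℤ) + 1 ≤ (y : ℤ) := by exact_mod_cast hlt
      have d2 : ((x : ℤ)^2 + x*y + y^2) + 1 ≤ x*y*(x+y) := by nlinarith
      have key : ((y : ℤ))^3 + x^3*y < x^3 + y^3*x := by
        nlinarith [mul_le_mul (by linarith : (1:ℤ) ≤ (y:ℤ) - x)
          (by linarith : (1:ℤ) ≤ (x:ℤ)*y*(x+y) - (x^2+x*y+y^2)) (by norm_num)
          (by linarith : (0:ℤ) ≤ (y:ℤ) - x)]
      exact_mod_cast key
    calc y ^ 3 * P + x ^ 3 * (y * P) = (y ^ 3 + x ^ 3 * y) * P := by ring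
    _ < (x ^ 3 + y ^ 3 * x) * P := by
        exact Nat.mul_lt_mul_of_lt_of_le h1 le_rfl hP1
    _ = x ^ 3 * P + y ^ 3 * (x * P) := by ring
  omega

lemma antitone_eq (n : ℕ) (k : Fin n → ℕ) (hk : Antitone k) (σ : Equiv.Perm (Fin n))
    (ha : Antitone (k ∘ σ)) : k ∘ σ = k := by
  have hrev : Antitone (Fin.revPerm : Equiv.Perm (Fin n)) := fun a b h => Fin.rev_le_rev.2 h
  set f : Fin n → ℕ := k ∘ (Fin.revPerm : Equiv.Perm (Fin n)) with hf
  have hfm : Monotone f := fun x y h => hk (hrev h)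
  set τ : Equiv.Perm (Fin n) := Fin.revPerm.trans (σ.trans Fin.revPerm) with hτ
  have hft : f ∘ τ = (k ∘ σ) ∘ (Fin.revPerm : Equiv.Perm (Fin n)) := by
    funext x
    simp [hf, hτ, Equiv.trans_apply, Fin.rev_rev]
  have hftm : Monotone (f ∘ τ) := by
    rw [hft]; exact fun x y h => ha (hrev h)
  have h1 : f ∘ τ = f ∘ Tuple.sort f := Tuple.comp_sort_eq_comp_iff_monotone.2 hftm
  have h2 : f ∘ (1 : Equiv.Perm (Fin n)) = f ∘ Tuple.sort f :=
    Tuple.comp_sort_eq_comp_iff_monotone.2 (by simpa using hfm)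
  have h3 : f ∘ τ = f := by rw [h1, ← h2]; rfl
  have h4 : (k ∘ σ) ∘ (Fin.revPerm : Equiv.Perm (Fin n)) = k ∘ (Fin.revPerm : Equiv.Perm (Fin n)) := by
    rw [← hft, h3, hf]
  funext x
  have := congrFun h4 (Fin.revPerm x)
  simpa [Fin.rev_rev] using this

theorem decreasing_order_minimizes_flops (n : ℕ) (k : Fin n → ℕ)
    (hk : ∀ l, 2 ≤ k l) (hsorted : Antitone k) :
    ∀ σ : Equiv.Perm (Fin n), flop1 n k ≤ flop1 n (k ∘ σ) := by
  -- strong induction on flop1 n (k ∘ σ)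
  suffices H : ∀ N : ℕ, ∀ σ : Equiv.Perm (Fin n), flop1 n (k ∘ σ) = N → flop1 n k ≤ flop1 n (k ∘ σ) by
    intro σ; exact H _ σ rfl
  intro N
  induction N using Nat.strong_induction_on with
  | _ N ih =>
    intro σ hN
    by_cases hcase : ∃ i i' : Fin n, (i' : ℕ) = (i : ℕ) + 1 ∧ (k ∘ σ) i < (k ∘ σ) i'
    · obtain ⟨i, i', hii, hlt⟩ := hcase
      have h2 : ∀ l, 2 ≤ (k ∘ σ) l := fun l => hk _
      have hdec := swap_lt n (k ∘ σ) h2 i i' hii hlt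
      have heq : (k ∘ σ) ∘ (Equiv.swap i i') = k ∘ ((Equiv.swap i i').trans σ) := by
        funext x; simp [Equiv.trans_apply]
      rw [heq] at hdec
      have hle := ih (flop1 n (k ∘ ((Equiv.swap i i').trans σ))) (hN ▸ hdec)
        ((Equiv.swap i i').trans σ) rfl
      exact le_trans hle (le_of_lt hdec)
    · push_neg at hcase
      have step : ∀ m : ℕ, ∀ h : m + 1 < n,
          (k ∘ σ) ⟨m + 1, h⟩ ≤ (k ∘ σ) ⟨m, by omega⟩ := by
        intro m h
        exact hcase ⟨m, by omega⟩ ⟨m + 1, h⟩ rfl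
      have hanti : Antitone (k ∘ σ) := by
        refine antitone_iff_forall_lt.2 ?_
        intro a b hab
        have key : ∀ d : ℕ, ∀ a b : Fin n, (b : ℕ) = (a : ℕ) + d → (k ∘ σ) b ≤ (k ∘ σ) a := by
          intro d
          induction d with
          | zero => intro a b h; rw [show b = a from Fin.ext (by omega)]
          | succ d ihd =>
            intro a b h
            have hlt1 : (a : ℕ) + d + 1 < n := by have := b.isLt; omega
            have hb : b = ⟨(a : ℕ) + d + 1, hlt1⟩ := Fin.ext (by simp; omega)
            rw [hb]
            exact le_trans (step ((a : ℕ) + d) hlt1) (ihd a ⟨(a : ℕ) + d, by omega⟩ rfl)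
        exact key ((b : ℕ) - (a : ℕ)) a b (by omega)
      rw [antitone_eq n k hsorted σ hanti]
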